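/- Fix γ ∈ ℝ and define L(S,P) = cosh(γ)·S + sinh(γ)·√(S² + P²) on the set {(S,P) ∈ ℝ² : P ≠ 0}. Then L satisfies the self-duality equation L_S² − (2S/P)·L_S·L_P − L_P² = 1 at every point of this set. -/

import Mathlib

/-- The ModMax Lagrangian satisfies the self-duality equation wherever P ≠ 0. -/
theorem modmax_self_dual (γ : ℝ) (L : ℝ → ℝ → ℝ)
    (hL : ∀ S P : ℝ, L S P = Real.cosh γ * S + Real.sinh γ * Real.sqrt (S ^ 2 + P ^ 2)) :
    ∀ S P : ℝ, P ≠ 0 →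
      (deriv (fun s => L s P) S) ^ 2
        - (2 * S / P) * deriv (fun s => L s P) S * deriv (fun t => L S t) P
        - (deriv (fun t => L S t) P) ^ 2 = 1 := by
  intro S P hP
  have hpos : (0:ℝ) < S ^ 2 + P ^ 2 := by positivity
  set r := Real.sqrt (S ^ 2 + P ^ 2) with hr
  have hrpos : 0 < r := Real.sqrt_pos.mpr hpos
  have hrsq : r ^ 2 = S ^ 2 + P ^ 2 := Real.sq_sqrt hpos.le
  have hrne : r ≠ 0 := hrpos.ne'
  have hne : S ^ 2 + P ^ 2 ≠ 0 := hpos.ne'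
  -- derivative in S
  have d1 : HasDerivAt (fun s => L s P)
      (Real.cosh γ + Real.sinh γ * (S / r)) S := by
    have hin : HasDerivAt (fun s : ℝ => s ^ 2 + P ^ 2) (2 * S) S := by
      simpa using (hasDerivAt_pow 2 S).add_const (P ^ 2)
    have hs : HasDerivAt (fun s : ℝ => Real.sqrt (s ^ 2 + P ^ 2))
        (r⁻¹ * 2⁻¹ * (2 * S)) S := by
      simpa [Function.comp_def, hr] using (Real.hasDerivAt_sqrt hne).comp S hin
    have : HasDerivAt (fun s : ℝ => Real.cosh γ * s + Real.sinh γ * Real.sqrt (s ^ 2 + P ^ 2))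
        (Real.cosh γ * 1 + Real.sinh γ * (r⁻¹ * 2⁻¹ * (2 * S))) S :=
      ((hasDerivAt_id S).const_mul (Real.cosh γ)).add (hs.const_mul (Real.sinh γ))
    have heq : (fun s => L s P) = fun s : ℝ =>
        Real.cosh γ * s + Real.sinh γ * Real.sqrt (s ^ 2 + P ^ 2) := by
      funext s; exact hL s P
    rw [heq]
    convert this using 1
    field_simp
  have d2 : HasDerivAt (fun t => L S t) (Real.sinh γ * (P / r)) P := by
    have hin : HasDerivAt (fun t : ℝ => S ^ 2 + t ^ 2) (2 * P) P := by
      simpa using (hasDerivAt_pow 2 P).const_add (S ^ 2)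
    have hs : HasDerivAt (fun t : ℝ => Real.sqrt (S ^ 2 + t ^ 2))
        (r⁻¹ * 2⁻¹ * (2 * P)) P := by
      simpa [Function.comp_def, hr] using (Real.hasDerivAt_sqrt hne).comp P hin
    have : HasDerivAt (fun t : ℝ => Real.cosh γ * S + Real.sinh γ * Real.sqrt (S ^ 2 + t ^ 2))
        (Real.sinh γ * (r⁻¹ * 2⁻¹ * (2 * P))) P := by
      simpa using (hs.const_mul (Real.sinh γ)).const_add (Real.cosh γ * S)
    have heq : (fun t => L S t) = fun t : ℝ =>
        Real.cosh γ * S + Real.sinh γ * Real.sqrt (S ^ 2 + t ^ 2) := by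
      funext t; exact hL S t
    rw [heq]
    convert this using 1
    field_simp
  rw [d1.deriv, d2.deriv]
  have hcs : Real.cosh γ ^ 2 - Real.sinh γ ^ 2 = 1 := Real.cosh_sq_sub_sinh_sq γ
  have key : (Real.cosh γ + Real.sinh γ * (S / r)) ^ 2
      - 2 * S / P * (Real.cosh γ + Real.sinh γ * (S / r)) * (Real.sinh γ * (P / r))
      - (Real.sinh γ * (P / r)) ^ 2
      = Real.cosh γ ^ 2 - Real.sinh γ ^ 2 * ((S ^ 2 + P ^ 2) / r ^ 2) := by
    field_simp
    ring
  rw [key, ← hrsq, div_self (pow_ne_zero 2 hrne), mul_one, hcs]
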